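/- arXiv:1908.11679 — 2 statements merged into one kernel-verified Lean document; each statement's English description precedes it below -/
import Mathlib

section
/- Let λ = [λ₁, …, λ_k] be a partition of n. Then λ* = [λ₂, …, λ_k] is the unique partition μ of n − λ₁ such that ᵗλ and ᵗμ are 2-transverse. -/
/-- A partition, encoded as a weakly decreasing function `ℕ → ℕ` (0-indexed parts)
that is eventually zero. -/
def IsPartition (f : ℕ → ℕ) : Prop := Antitone f ∧ ∃ N, ∀ i, N ≤ i → f i = 0

/-- The conjugate (transpose) partition: `conj f i = #{j : f j ≥ i+1}` (0-indexed,
so `conj f i` is the (i+1)-st column length, i.e. ᵗλ_{i+1}). -/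
noncomputable def conj (f : ℕ → ℕ) (i : ℕ) : ℕ := Nat.card {j : ℕ // i + 1 ≤ f j}

/-- Two partitions are close if corresponding parts differ by at most 1. -/
def Close (f g : ℕ → ℕ) : Prop := ∀ i, f i ≤ g i + 1 ∧ g i ≤ f i + 1

/-- Two partitions are 2-transverse: they are close and every positive common part
(at equal indices) occurs an even number of times. -/
def Transverse2 (f g : ℕ → ℕ) : Prop :=
  Close f g ∧ ∀ p, 0 < p → Even (Nat.card {i : ℕ // f i = p ∧ g i = p})

/-- The size |λ| of a partition: the (finite) sum of its parts. -/
noncomputable def psize (f : ℕ → ℕ) : ℕ := ∑ᶠ i, f i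

/-- Prepend a part to a partition. -/
def pcons (a : ℕ) (f : ℕ → ℕ) : ℕ → ℕ
  | 0 => a
  | (i+1) => f i

/-- `RemoveTwoHook ν μ` : the partition μ is obtained from ν by removing a 2-hook,
either two adjacent blocks in one row (type (1²)) or two adjacent blocks in one
column (type (2)), the result still being a Young diagram. -/
def RemoveTwoHook (ν μ : ℕ → ℕ) : Prop :=
  IsPartition ν ∧ IsPartition μ ∧
  ((∃ i, μ i + 2 = ν i ∧ ∀ j, j ≠ i → μ j = ν j) ∨
   (∃ i, μ i + 1 = ν i ∧ μ (i+1) + 1 = ν (i+1) ∧ ∀ j, j ≠ i → j ≠ i + 1 → μ j = ν j))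

lemma conj_eq_ncard (f : ℕ → ℕ) (i : ℕ) : conj f i = {j : ℕ | i + 1 ≤ f j}.ncard :=
  Nat.card_coe_set_eq _

lemma aux_Iio_ncard (n : ℕ) : (Set.Iio n : Set ℕ).ncard = n := by
  rw [← Finset.coe_range, Set.ncard_coe_finset, Finset.card_range]

lemma aux_lower_eq_Iio {S : Set ℕ} (hS : S.Finite)
    (hlow : ∀ a b : ℕ, a ≤ b → b ∈ S → a ∈ S) : S = Set.Iio S.ncard := by
  ext j
  simp only [Set.mem_Iio]
  constructor
  · intro hj
    have hsub : Set.Iic j ⊆ S := fun a ha => hlow a j ha hj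
    have := Set.ncard_le_ncard hsub hS
    rw [← Finset.coe_Iic, Set.ncard_coe_finset, Nat.card_Iic] at this
    omega
  · intro hj
    by_contra hjS
    have hsub : S ⊆ Set.Iio j := by
      intro k hk
      simp only [Set.mem_Iio]
      by_contra h
      exact hjS (hlow j k (by omega) hk)
    have := Set.ncard_le_ncard hsub (Set.finite_Iio j)
    rw [aux_Iio_ncard] at this
    omega

lemma conj_set_eq {f : ℕ → ℕ} (hf : IsPartition f) (i : ℕ) :
    {j : ℕ | i + 1 ≤ f j} = Set.Iio (conj f i) := by
  obtain ⟨hmono, N, hN⟩ := hf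
  have hfin : {j : ℕ | i + 1 ≤ f j}.Finite := by
    apply Set.Finite.subset (Set.finite_Iio N)
    intro j hj
    simp only [Set.mem_setOf_eq] at hj
    simp only [Set.mem_Iio]
    by_contra h
    have := hN j (by omega)
    omega
  have hlow : ∀ a b : ℕ, a ≤ b → b ∈ {j : ℕ | i + 1 ≤ f j} → a ∈ {j : ℕ | i + 1 ≤ f j} := by
    intro a b hab hb
    simp only [Set.mem_setOf_eq] at *
    exact le_trans hb (hmono hab)
  rw [aux_lower_eq_Iio hfin hlow, conj_eq_ncard]

lemma conj_spec {f : ℕ → ℕ} (hf : IsPartition f) (i j : ℕ) :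
    i + 1 ≤ f j ↔ j < conj f i := by
  have h := conj_set_eq hf i
  constructor
  · intro hm
    have : j ∈ Set.Iio (conj f i) := h ▸ hm
    exact this
  · intro hm
    have : j ∈ {j : ℕ | i + 1 ≤ f j} := h ▸ Set.mem_Iio.mpr hm
    exact this

lemma conj_conj {f : ℕ → ℕ} (hf : IsPartition f) : conj (conj f) = f := by
  funext j
  rw [conj_eq_ncard]
  have hset : {i : ℕ | j + 1 ≤ conj f i} = Set.Iio (f j) := by
    ext i
    simp only [Set.mem_setOf_eq, Set.mem_Iio]
    rw [show (j + 1 ≤ conj f i ↔ j < conj f i) from Iff.rfl, ← conj_spec hf i j]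
    omega
  rw [hset, aux_Iio_ncard]

lemma conj_tail {f : ℕ → ℕ} (hf : IsPartition f) (i : ℕ) :
    conj (fun k => f (k + 1)) i = conj f i - 1 := by
  rw [conj_eq_ncard]
  have hset : {j : ℕ | i + 1 ≤ f (j + 1)} = Set.Iio (conj f i - 1) := by
    ext j
    simp only [Set.mem_setOf_eq, Set.mem_Iio]
    rw [conj_spec hf i (j + 1)]
    omega
  rw [hset, aux_Iio_ncard]

lemma conj_zero {f : ℕ → ℕ} (hf : IsPartition f) {i : ℕ} (h : f 0 ≤ i) : conj f i = 0 := by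
  by_contra hne
  have : 0 < conj f i := Nat.pos_of_ne_zero hne
  have := (conj_spec hf i 0).mpr this
  omega

lemma psize_eq_sum {f : ℕ → ℕ} {N : ℕ} (hN : ∀ j, N ≤ j → f j = 0) :
    psize f = ∑ i ∈ Finset.range N, f i := by
  apply finsum_eq_sum_of_support_subset
  intro j hj
  simp only [Function.mem_support] at hj
  simp only [Finset.coe_range, Set.mem_Iio]
  by_contra h
  exact hj (hN j (by omega))

lemma conj_card {f : ℕ → ℕ} {N : ℕ} (hN : ∀ j, N ≤ j → f j = 0) (i : ℕ) :
    conj f i = ((Finset.range N).filter (fun j => i + 1 ≤ f j)).card := by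
  rw [conj_eq_ncard, ← Set.ncard_coe_finset]
  congr 1
  ext j
  simp only [Set.mem_setOf_eq, Finset.coe_filter, Finset.mem_range]
  constructor
  · intro h
    refine ⟨?_, h⟩
    by_contra hj
    have := hN j (by omega)
    omega
  · exact fun h => h.2

lemma psize_conj {f : ℕ → ℕ} (hf : IsPartition f) : psize (conj f) = psize f := by
  obtain ⟨hmono, N, hN⟩ := hf
  have hf' : IsPartition f := ⟨hmono, N, hN⟩
  have hconj0 : ∀ i, f 0 ≤ i → conj f i = 0 := fun i h => conj_zero hf' h
  rw [psize_eq_sum hconj0, psize_eq_sum hN]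
  calc ∑ i ∈ Finset.range (f 0), conj f i
      = ∑ i ∈ Finset.range (f 0), ∑ j ∈ Finset.range N, (if i + 1 ≤ f j then 1 else 0) := by
        refine Finset.sum_congr rfl fun i _ => ?_
        rw [conj_card hN i, Finset.card_filter]
    _ = ∑ j ∈ Finset.range N, ∑ i ∈ Finset.range (f 0), (if i + 1 ≤ f j then 1 else 0) :=
        Finset.sum_comm
    _ = ∑ j ∈ Finset.range N, f j := by
        refine Finset.sum_congr rfl fun j _ => ?_
        rw [← Finset.card_filter]
        have : (Finset.range (f 0)).filter (fun i => i + 1 ≤ f j) = Finset.range (f j) := by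
          have hle : f j ≤ f 0 := hmono (Nat.zero_le j)
          ext i
          simp only [Finset.mem_filter, Finset.mem_range]
          omega
        rw [this, Finset.card_range]

/-- λ* is the unique partition μ of n − λ₁ such that ᵗλ and ᵗμ are 2-transverse. -/
theorem stmt2 (f : ℕ → ℕ) (hf : IsPartition f) :
    Transverse2 (conj f) (conj (fun i => f (i + 1))) ∧
    ∀ μ : ℕ → ℕ, IsPartition μ → psize μ + f 0 = psize f →
      Transverse2 (conj f) (conj μ) → μ = fun i => f (i + 1) := by
  have htail : ∀ i, conj (fun k => f (k + 1)) i = conj f i - 1 := conj_tail hf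
  constructor
  · constructor
    · intro i
      rw [htail i]
      omega
    · intro p hp
      have : IsEmpty {i : ℕ // conj f i = p ∧ conj (fun k => f (k + 1)) i = p} := by
        constructor
        rintro ⟨i, h1, h2⟩
        rw [htail i, h1] at h2
        omega
      rw [Nat.card_of_isEmpty]
      exact Even.zero
  · intro μ hμ hsize htr
    obtain ⟨hclose, _⟩ := htr
    -- key: conj μ = conj (fun i => f (i+1))
    set a := f 0 with ha
    set c := conj f with hc
    set d := conj μ with hd
    have hc0 : ∀ i, a ≤ i → c i = 0 := fun i h => conj_zero hf h
    have hd0 : ∀ i, μ 0 ≤ i → d i = 0 := fun i h => conj_zero hμ h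
    set K := max a (μ 0) with hK
    have hcK : ∀ i, K ≤ i → c i = 0 := fun i h => hc0 i (le_trans (le_max_left _ _) h)
    have hdK : ∀ i, K ≤ i → d i = 0 := fun i h => hd0 i (le_trans (le_max_right _ _) h)
    have hsum : ∑ i ∈ Finset.range K, c i = ∑ i ∈ Finset.range K, d i + a := by
      have e1 : psize c = ∑ i ∈ Finset.range K, c i := psize_eq_sum hcK
      have e2 : psize d = ∑ i ∈ Finset.range K, d i := psize_eq_sum hdK
      have e3 : psize c = psize f := psize_conj hf
      have e4 : psize d = psize μ := psize_conj hμ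
      omega
    have haK : a ≤ K := le_max_left _ _
    have hca : ∑ i ∈ Finset.range K, c i = ∑ i ∈ Finset.range a, c i := by
      symm
      apply Finset.sum_subset (Finset.range_subset_range.mpr haK)
      intro i hi hia
      exact hc0 i (by simp only [Finset.mem_range] at *; omega)
    have hle : ∀ i ∈ Finset.range a, c i ≤ d i + 1 := fun i _ => (hclose i).1
    have chain1 : ∑ i ∈ Finset.range a, c i ≤ ∑ i ∈ Finset.range a, (d i + 1) :=
      Finset.sum_le_sum hle
    have chain2 : ∑ i ∈ Finset.range a, (d i + 1) = ∑ i ∈ Finset.range a, d i + a := by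
      rw [Finset.sum_add_distrib, Finset.sum_const, Finset.card_range, smul_eq_mul, mul_one]
    have chain3 : ∑ i ∈ Finset.range a, d i ≤ ∑ i ∈ Finset.range K, d i :=
      Finset.sum_le_sum_of_subset (Finset.range_subset_range.mpr haK)
    have heq1 : ∑ i ∈ Finset.range a, c i = ∑ i ∈ Finset.range a, (d i + 1) := by omega
    have heq2 : ∑ i ∈ Finset.range a, d i = ∑ i ∈ Finset.range K, d i := by omega
    have hterm : ∀ i ∈ Finset.range a, c i = d i + 1 :=
      (Finset.sum_eq_sum_iff_of_le hle).mp heq1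
    have hdz : ∀ i, a ≤ i → d i = 0 := by
      intro i hi
      rcases le_or_gt K i with h | h
      · exact hdK i h
      · have hsd : ∑ x ∈ Finset.range K \ Finset.range a, d x = 0 := by
          have := Finset.sum_sdiff (f := d) (Finset.range_subset_range.mpr haK)
          omega
        have : i ∈ Finset.range K \ Finset.range a := by
          simp only [Finset.mem_sdiff, Finset.mem_range]
          omega
        exact (Finset.sum_eq_zero_iff.mp hsd) i this
    have hdeq : d = conj (fun i => f (i + 1)) := by
      funext i
      rw [htail i]
      rcases lt_or_ge i a with h | h
      · have := hterm i (Finset.mem_range.mpr h)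
        omega
      · have h1 := hdz i h
        have h2 := hc0 i h
        omega
    have hμeq : μ = conj d := by rw [hd, conj_conj hμ]
    have htailp : IsPartition (fun i => f (i + 1)) := by
      obtain ⟨hmono, N, hN⟩ := hf
      exact ⟨fun x y hxy => hmono (by omega), N, fun i hi => hN (i + 1) (by omega)⟩
    rw [hμeq, hdeq, conj_conj htailp]
end

section
/- Let λ be a partition with λ₁ = λ₂ (largest part repeated) and let λ' be a partition with λ₁' = λ₁. Set μ' = [λ₂ + 1, λ₃, λ₄, …, λ_k] and λ'* = [λ'₂, λ'₃, …]. If μ' and λ'* are 2-transverse, then λ'₂ = λ₁, and λ and λ' are 2-transverse. -/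
/-- If λ₁ = λ₂, λ₁' = λ₁, and μ' = [λ₂+1, λ₃, …] is 2-transverse with λ'*, then
λ'₂ = λ₁ and λ, λ' are 2-transverse. -/
theorem stmt11 (f g : ℕ → ℕ) (hf : IsPartition f) (hg : IsPartition g)
    (h12 : f 0 = f 1) (hg1 : g 0 = f 0)
    (ht : Transverse2 (pcons (f 1 + 1) (fun i => f (i + 2))) (fun i => g (i + 1))) :
    g 1 = f 0 ∧ Transverse2 f g := by
  obtain ⟨hclose, heven⟩ := ht
  have hc0 := hclose 0
  simp only [pcons] at hc0
  have hganti : g 1 ≤ g 0 := hg.1 (by norm_num)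
  have e01 : g (0 + 1) = g 1 := rfl
  have hG1 : g 1 = f 0 := by omega
  obtain ⟨N, hN⟩ := hf.2
  refine ⟨hG1, ?_, ?_⟩
  · intro i
    match i with
    | 0 => omega
    | 1 => omega
    | (i+2) =>
      have := hclose (i+1)
      simp only [pcons] at this
      have e2 : g (i + 1 + 1) = g (i + 2) := rfl
      omega
  · intro p hp
    have hE := heven p hp
    set A : Set ℕ := {i | f i = p ∧ g i = p} with hA
    set B : Set ℕ := {j | f (j+2) = p ∧ g (j+2) = p} with hB
    have hBfin : B.Finite := by
      apply Set.Finite.subset (Set.finite_Iio N)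
      intro j hj
      by_contra h
      simp only [Set.mem_Iio, not_lt] at h
      have := hN (j+2) (by omega)
      simp only [hB, Set.mem_setOf_eq] at hj
      omega
    have hC : {j : ℕ | pcons (f 1 + 1) (fun i => f (i + 2)) j = p ∧ g (j+1) = p}
        = (fun j => j + 1) '' B := by
      ext j
      cases j with
      | zero =>
        simp only [Set.mem_setOf_eq, pcons, Set.mem_image, hB]
        constructor
        · rintro ⟨h1, h2⟩; exfalso; omega
        · rintro ⟨k, _, hk⟩; exfalso; omega
      | succ k =>
        simp only [Set.mem_setOf_eq, pcons, Set.mem_image, hB]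
        constructor
        · rintro ⟨h1, h2⟩; exact ⟨k, ⟨h1, h2⟩, rfl⟩
        · rintro ⟨m, hm, hmk⟩
          have : m = k := by omega
          subst this; exact hm
    have hCcard : Nat.card {j : ℕ // pcons (f 1 + 1) (fun i => f (i + 2)) j = p
        ∧ g (j+1) = p} = B.ncard := by
      have h1 : Nat.card {j : ℕ // pcons (f 1 + 1) (fun i => f (i + 2)) j = p
          ∧ g (j+1) = p} = Set.ncard {j : ℕ | pcons (f 1 + 1) (fun i => f (i + 2)) j = p
          ∧ g (j+1) = p} := Nat.card_coe_set_eq _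
      rw [h1, hC, Set.ncard_image_of_injective _ (fun a b h => by omega)]
    have hE' : Even B.ncard := by
      rw [← hCcard]
      convert hE using 2
    have hAcard : Nat.card {i : ℕ // f i = p ∧ g i = p} = A.ncard :=
      Nat.card_coe_set_eq A
    rw [hAcard]
    by_cases hp0 : f 0 = p
    · have hAeq : A = insert 0 (insert 1 ((fun j => j + 2) '' B)) := by
        ext i
        match i with
        | 0 =>
          constructor
          · intro _; exact Set.mem_insert 0 _
          · intro _; exact ⟨hp0, hg1.trans hp0⟩
        | 1 =>
          constructor
          · intro _; exact Set.mem_insert_of_mem _ (Set.mem_insert 1 _)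
          · intro _; exact ⟨h12 ▸ hp0, hG1.trans hp0⟩
        | (k+2) =>
          simp only [hA, Set.mem_setOf_eq, Set.mem_insert_iff, Set.mem_image, hB]
          constructor
          · rintro ⟨h1, h2⟩; right; right; exact ⟨k, ⟨h1, h2⟩, rfl⟩
          · rintro (h | h | ⟨m, hm, hmk⟩)
            · omega
            · omega
            · have : m = k := by omega
              subst this; exact hm
      have h0notin : (0 : ℕ) ∉ insert 1 ((fun j => j + 2) '' B) := by
        simp only [Set.mem_insert_iff, Set.mem_image]
        rintro (h | ⟨m, _, hm⟩) <;> omega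
      have h1notin : (1 : ℕ) ∉ (fun j => j + 2) '' B := by
        simp only [Set.mem_image]
        rintro ⟨m, _, hm⟩; omega
      have himfin : ((fun j => j + 2) '' B).Finite := hBfin.image _
      rw [hAeq, Set.ncard_insert_of_notMem h0notin (himfin.insert 1),
        Set.ncard_insert_of_notMem h1notin himfin,
        Set.ncard_image_of_injective _ (fun a b h => by omega)]
      obtain ⟨k, hk⟩ := hE'
      exact ⟨k + 1, by omega⟩
    · have hAeq : A = (fun j => j + 2) '' B := by
        ext i
        match i with
        | 0 =>
          simp only [hA, Set.mem_setOf_eq, Set.mem_image, hB]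
          constructor
          · rintro ⟨h1, h2⟩; omega
          · rintro ⟨m, _, hm⟩; omega
        | 1 =>
          simp only [hA, Set.mem_setOf_eq, Set.mem_image, hB]
          constructor
          · rintro ⟨h1, h2⟩; omega
          · rintro ⟨m, _, hm⟩; omega
        | (k+2) =>
          simp only [hA, Set.mem_setOf_eq, Set.mem_image, hB]
          constructor
          · rintro ⟨h1, h2⟩; exact ⟨k, ⟨h1, h2⟩, rfl⟩
          · rintro ⟨m, hm, hmk⟩
            have : m = k := by omega
            subst this; exact hm
      rw [hAeq, Set.ncard_image_of_injective _ (fun a b h => by omega)]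
      exact hE'
end
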